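/- Let μ ∈ ℂ, let r > 0, and let (a_n)_{n≥0} and (b_n)_{n≥0} be sequences in ℂ such that the power series R₁(η) = ∑_{n=0}^∞ a_n·η^{2n} and R₂(η) = ∑_{n=0}^∞ b_n·η^{2n+1} converge for all |η| < r. Then R₁ satisfies (μ−η²)·R₁''(η) − 2η·(μ−1−η²)·R₁'(η) + (μ+1)·(μ−2−η²)·R₁(η) = 0 for all |η| < r if and only if 2μ·a₁ + (μ²−μ−2)·a₀ = 0 and, for every n ≥ 1, 2μ·(2n²+3n+1)·a_{n+1} − (4n² + (4μ−6)·n − μ² + μ + 2)·a_n + (4n − 5 − μ)·a_{n−1} = 0. Likewise, R₂ satisfies the same differential equation for all |η| < r if and only if 6μ·b₁ + (μ²−3μ)·b₀ = 0 and, for every n ≥ 1, 2μ·(2n²+5n+3)·b_{n+1} − (4n² + (4μ−2)·n − μ² + 3μ)·b_n + (4n − 3 − μ)·b_{n−1} = 0. -/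

import Mathlib

open Complex

open FormalMultilinearSeries Filter in

noncomputable section
namespace S6

def sh (m : ℕ) (u : ℕ → ℂ) : ℕ → ℂ := fun k => if k < m then 0 else u (k - m)

def D1 (c : ℕ → ℂ) : ℕ → ℂ := fun k => ((k : ℂ) + 1) * c (k + 1)

def dcoef (μ : ℂ) (c : ℕ → ℂ) : ℕ → ℂ := fun k =>
  μ * D1 (D1 c) k - sh 2 (D1 (D1 c)) k - 2 * (μ - 1) * sh 1 (D1 c) k
    + 2 * sh 3 (D1 c) k + (μ + 1) * (μ - 2) * c k - (μ + 1) * sh 2 c k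

lemma hasSum_sh (m : ℕ) {u : ℕ → ℂ} {η S : ℂ} (h : HasSum (fun k => u k * η ^ k) S) :
    HasSum (fun k => sh m u k * η ^ k) (η ^ m * S) := by
  have hinj : Function.Injective (fun k : ℕ => k + m) := add_left_injective m
  have hsupp : ∀ x ∉ Set.range (fun k : ℕ => k + m), sh m u x * η ^ x = 0 := by
    intro x hx
    have hxm : x < m := by
      by_contra hc
      exact hx ⟨x - m, show x - m + m = x by omega⟩
    simp [sh, hxm]
  rw [← hinj.hasSum_iff hsupp]
  have hfe : ((fun k => sh m u k * η ^ k) ∘ fun k : ℕ => k + m)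
      = fun k => η ^ m * (u k * η ^ k) := by
    funext k
    simp only [Function.comp_apply, sh, if_neg (by omega : ¬ k + m < m), Nat.add_sub_cancel]
    ring
  rw [hfe]
  exact h.mul_left _

lemma buildHasFPS {r : ℝ} (hr : 0 < r) (c : ℕ → ℂ) (f : ℂ → ℂ)
    (h : ∀ η : ℂ, ‖η‖ < r → HasSum (fun k => c k * η ^ k) (f η)) :
    HasFPowerSeriesOnBall f (ofScalars ℂ c) 0 (ENNReal.ofReal r) := by
  constructor
  · apply ENNReal.le_of_forall_nnreal_lt
    intro t ht
    have htr : (t : ℝ) < r := by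
      rwa [ENNReal.lt_ofReal_iff_toReal_lt (by simp), ENNReal.coe_toReal] at ht
    have hsum : Summable fun k => c k * ((t : ℝ) : ℂ) ^ k :=
      (h _ (by simpa [Complex.norm_of_nonneg t.coe_nonneg] using htr)).summable
    apply le_radius_of_tendsto
    have hfe : (fun n => ‖(ofScalars ℂ c) n‖ * (t : ℝ) ^ n)
        = fun n => ‖c n * ((t : ℝ) : ℂ) ^ n‖ := by
      funext n
      simp only [ofScalars_norm, norm_mul, norm_pow, Complex.norm_real, Real.norm_eq_abs,
        _root_.abs_of_nonneg t.coe_nonneg]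
    rw [hfe]
    simpa using hsum.tendsto_atTop_zero.norm
  · exact ENNReal.ofReal_pos.2 hr
  · intro y hy
    have hy' : ‖y‖ < r := by
      rw [mem_emetric_ball_zero_iff] at hy
      have := (ENNReal.lt_ofReal_iff_toReal_lt (by simp)).1 hy
      simpa using this
    have := (h y hy')
    rw [zero_add]
    convert this using 1
    · rfl
    funext n
    rw [ofScalars_apply_eq, smul_eq_mul]

lemma derivHasSum {r : ℝ} (hr : 0 < r) (c : ℕ → ℂ)
    (h : ∀ η : ℂ, ‖η‖ < r → Summable fun k => c k * η ^ k) :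
    ∀ η : ℂ, ‖η‖ < r →
      HasSum (fun k => D1 c k * η ^ k) (deriv (fun w : ℂ => ∑' k, c k * w ^ k) η) := by
  intro η hη
  have hp : HasFPowerSeriesOnBall (fun w : ℂ => ∑' k, c k * w ^ k) (ofScalars ℂ c) 0
      (ENNReal.ofReal r) := buildHasFPS hr c _ fun w hw => (h w hw).hasSum
  have hmem : η ∈ Metric.eball (0 : ℂ) (ENNReal.ofReal r) := by
    rw [mem_emetric_ball_zero_iff]
    rw [show (‖η‖ₑ : ENNReal) = ENNReal.ofReal ‖η‖ by rw [ofReal_norm]]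
    exact ENNReal.ofReal_lt_ofReal_iff_of_nonneg (norm_nonneg η) |>.2 hη
  have hs := hp.fderiv.hasSum hmem
  have hs1 := hs.mapL (ContinuousLinearMap.apply ℂ ℂ 1)
  have hterm : ∀ n : ℕ, (((ofScalars ℂ c).derivSeries n) (fun _ => η)) 1 = D1 c n * η ^ n := by
    intro n
    rcases eq_or_ne η 0 with h0 | h0
    · subst h0
      cases n with
      | zero =>
        have harg : (fun _ : Fin 0 => (0 : ℂ)) = (fun _ : Fin 0 => (1 : ℂ)) :=
          funext fun i => i.elim0
        rw [harg]
        have h1 := (ofScalars ℂ c).derivSeries_apply_diag 0 (1 : ℂ)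
        rw [h1, ofScalars_apply_eq]
        simp [D1]
      | succ m =>
        have hz : ((ofScalars ℂ c).derivSeries (m + 1)) (fun _ : Fin (m + 1) => (0 : ℂ)) = 0 :=
          ContinuousMultilinearMap.map_coord_zero _ (0 : Fin (m + 1)) rfl
        rw [hz]
        simp [D1]
    · have hdiag := (ofScalars ℂ c).derivSeries_apply_diag n η
      have hL : (((ofScalars ℂ c).derivSeries n) (fun _ => η)) η
          = η * ((((ofScalars ℂ c).derivSeries n) (fun _ => η)) 1) := by
        have hsm := (((ofScalars ℂ c).derivSeries n) (fun _ => η)).map_smul η (1 : ℂ)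
        simpa [smul_eq_mul] using hsm
      apply mul_left_cancel₀ h0
      rw [← hL, hdiag, ofScalars_apply_eq, smul_eq_mul, nsmul_eq_mul, D1]
      push_cast
      ring
  have hfin : HasSum (fun n => D1 c n * η ^ n)
      (fderiv ℂ (fun w : ℂ => ∑' k, c k * w ^ k) (0 + η) 1) := by
    have := hs1
    simp only [ContinuousLinearMap.apply_apply] at this
    simpa only [hterm] using this
  rw [zero_add, fderiv_apply_one_eq_deriv] at hfin
  exact hfin

lemma main_core {r : ℝ} (hr : 0 < r) (μ : ℂ) (c : ℕ → ℂ)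
    (h : ∀ η : ℂ, ‖η‖ < r → Summable fun k => c k * η ^ k) :
    (∀ η : ℂ, ‖η‖ < r →
        (μ - η ^ 2) * deriv (deriv (fun w : ℂ => ∑' k, c k * w ^ k)) η
          - 2 * η * (μ - 1 - η ^ 2) * deriv (fun w : ℂ => ∑' k, c k * w ^ k) η
          + (μ + 1) * (μ - 2 - η ^ 2) * (∑' k, c k * η ^ k) = 0)
      ↔ ∀ k, dcoef μ c k = 0 := by
  have hd1 := derivHasSum hr c h
  have hsum1 : ∀ η : ℂ, ‖η‖ < r → Summable fun k => D1 c k * η ^ k :=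
    fun η hη => (hd1 η hη).summable
  have hd2' := derivHasSum hr (D1 c) hsum1
  have hopen : IsOpen {w : ℂ | ‖w‖ < r} :=
    isOpen_lt continuous_norm continuous_const
  have hd2 : ∀ η : ℂ, ‖η‖ < r →
      HasSum (fun k => D1 (D1 c) k * η ^ k)
        (deriv (deriv (fun w : ℂ => ∑' k, c k * w ^ k)) η) := by
    intro η hη
    have hEq : deriv (fun w : ℂ => ∑' k, c k * w ^ k)
        =ᶠ[nhds η] (fun w => ∑' k, D1 c k * w ^ k) := by
      filter_upwards [hopen.mem_nhds hη] with w hw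
      exact ((hd1 w hw).tsum_eq).symm
    rw [hEq.deriv_eq]
    exact hd2' η hη
  have hBig : ∀ η : ℂ, ‖η‖ < r →
      HasSum (fun k => dcoef μ c k * η ^ k)
        ((μ - η ^ 2) * deriv (deriv (fun w : ℂ => ∑' k, c k * w ^ k)) η
          - 2 * η * (μ - 1 - η ^ 2) * deriv (fun w : ℂ => ∑' k, c k * w ^ k) η
          + (μ + 1) * (μ - 2 - η ^ 2) * (∑' k, c k * η ^ k)) := by
    intro η hη
    have s0 : HasSum (fun k => c k * η ^ k) (∑' k, c k * η ^ k) := (h η hη).hasSum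
    have s1 := hd1 η hη
    have s2 := hd2 η hη
    have t1 := s2.mul_left μ
    have t2 := hasSum_sh 2 s2
    have t3 := (hasSum_sh 1 s1).mul_left (2 * (μ - 1))
    have t4 := (hasSum_sh 3 s1).mul_left 2
    have t5 := s0.mul_left ((μ + 1) * (μ - 2))
    have t6 := (hasSum_sh 2 s0).mul_left (μ + 1)
    have hcomb := ((((t1.sub t2).sub t3).add t4).add t5).sub t6
    have hfun : (fun k => μ * (D1 (D1 c) k * η ^ k) - sh 2 (D1 (D1 c)) k * η ^ k
        - 2 * (μ - 1) * (sh 1 (D1 c) k * η ^ k) + 2 * (sh 3 (D1 c) k * η ^ k)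
        + (μ + 1) * (μ - 2) * (c k * η ^ k) - (μ + 1) * (sh 2 c k * η ^ k))
        = fun k => dcoef μ c k * η ^ k := by
      funext k
      simp only [dcoef]
      ring
    rw [hfun] at hcomb
    convert hcomb using 1
    · rfl
    ring
  constructor
  · intro hzero k
    have hps := buildHasFPS hr (dcoef μ c) _ hBig
    have h0 : ofScalars ℂ (dcoef μ c) = 0 := by
      apply hps.hasFPowerSeriesAt.eq_zero_of_eventually
      filter_upwards [hopen.mem_nhds (show ‖(0:ℂ)‖ < r by simpa using hr)] with w hw
      exact hzero w hw
    exact (ofScalars_eq_zero ℂ k).1 (by rw [h0]; rfl)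
  · intro hz η hη
    have hB := hBig η hη
    simp only [hz, zero_mul] at hB
    simpa using hB.unique hasSum_zero

def ce (a : ℕ → ℂ) : ℕ → ℂ := fun k => if k % 2 = 0 then a (k / 2) else 0
def co (b : ℕ → ℂ) : ℕ → ℂ := fun k => if k % 2 = 1 then b (k / 2) else 0

lemma ce_even (a : ℕ → ℂ) (n : ℕ) : ce a (2 * n) = a n := by
  simp [ce, Nat.mul_div_cancel_left n (by norm_num : 0 < 2), Nat.mul_mod_right]

lemma ce_odd (a : ℕ → ℂ) (n : ℕ) : ce a (2 * n + 1) = 0 := by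
  simp [ce, Nat.mul_add_mod]

lemma co_even (b : ℕ → ℂ) (n : ℕ) : co b (2 * n) = 0 := by
  simp [co, Nat.mul_mod_right]

lemma co_odd (b : ℕ → ℂ) (n : ℕ) : co b (2 * n + 1) = b n := by
  have h1 : (2 * n + 1) % 2 = 1 := by omega
  have h2 : (2 * n + 1) / 2 = n := by omega
  simp [co, h1, h2]

lemma dcoef_eval (μ : ℂ) (c : ℕ → ℂ) (j : ℕ) : dcoef μ c (j + 3) =
    μ * ((j : ℂ) + 4) * ((j : ℂ) + 5) * c (j + 5)
      - ((j : ℂ) + 2) * ((j : ℂ) + 3) * c (j + 3)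
      - 2 * (μ - 1) * ((j : ℂ) + 3) * c (j + 3)
      + 2 * ((j : ℂ) + 1) * c (j + 1)
      + (μ + 1) * (μ - 2) * c (j + 3) - (μ + 1) * c (j + 1) := by
  simp only [dcoef, D1, sh, if_neg (show ¬ j + 3 < 2 by omega),
    if_neg (show ¬ j + 3 < 1 by omega), if_neg (show ¬ j + 3 < 3 by omega),
    show j + 3 - 2 = j + 1 by omega, show j + 3 - 1 = j + 2 by omega,
    show j + 3 - 3 = j by omega]
  push_cast
  ring
lemma dcoef_ce_zero (μ : ℂ) (a : ℕ → ℂ) :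
    dcoef μ (ce a) 0 = 2 * μ * a 1 + (μ ^ 2 - μ - 2) * a 0 := by
  norm_num [dcoef, D1, sh, ce]
  ring

lemma dcoef_ce_even (μ : ℂ) (a : ℕ → ℂ) (m : ℕ) : dcoef μ (ce a) (2 * m + 2) =
    2 * μ * (2 * ((m : ℂ) + 1) ^ 2 + 3 * ((m : ℂ) + 1) + 1) * a (m + 2)
      - (4 * ((m : ℂ) + 1) ^ 2 + (4 * μ - 6) * ((m : ℂ) + 1) - μ ^ 2 + μ + 2) * a (m + 1)
      + (4 * ((m : ℂ) + 1) - 5 - μ) * a m := by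
  cases m with
  | zero =>
    norm_num [dcoef, D1, sh, ce]
    ring
  | succ i =>
    rw [show 2 * (i + 1) + 2 = (2 * i + 1) + 3 by ring, dcoef_eval,
      show 2 * i + 1 + 5 = 2 * (i + 3) by ring, show 2 * i + 1 + 3 = 2 * (i + 2) by ring,
      show 2 * i + 1 + 1 = 2 * (i + 1) by ring, ce_even, ce_even, ce_even]
    push_cast
    ring

lemma dcoef_ce_odd (μ : ℂ) (a : ℕ → ℂ) (j : ℕ) : dcoef μ (ce a) (2 * j + 1) = 0 := by
  cases j with
  | zero => norm_num [dcoef, D1, sh, ce]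
  | succ i =>
    rw [show 2 * (i + 1) + 1 = 2 * i + 3 by ring, dcoef_eval,
      show 2 * i + 5 = 2 * (i + 2) + 1 by ring, show 2 * i + 3 = 2 * (i + 1) + 1 by ring,
      ce_odd, ce_odd, ce_odd]
    ring

lemma dcoef_co_one (μ : ℂ) (b : ℕ → ℂ) :
    dcoef μ (co b) 1 = 6 * μ * b 1 + (μ ^ 2 - 3 * μ) * b 0 := by
  norm_num [dcoef, D1, sh, co]
  ring

lemma dcoef_co_rec (μ : ℂ) (b : ℕ → ℂ) (m : ℕ) : dcoef μ (co b) (2 * m + 3) =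
    2 * μ * (2 * ((m : ℂ) + 1) ^ 2 + 5 * ((m : ℂ) + 1) + 3) * b (m + 2)
      - (4 * ((m : ℂ) + 1) ^ 2 + (4 * μ - 2) * ((m : ℂ) + 1) - μ ^ 2 + 3 * μ) * b (m + 1)
      + (4 * ((m : ℂ) + 1) - 3 - μ) * b m := by
  rw [show 2 * m + 3 = (2 * m) + 3 by ring, dcoef_eval,
    show 2 * m + 5 = 2 * (m + 2) + 1 by ring, show 2 * m + 3 = 2 * (m + 1) + 1 by ring,
    show 2 * m + 1 = 2 * m + 1 by ring, co_odd, co_odd, co_odd]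
  push_cast
  ring

lemma dcoef_co_even (μ : ℂ) (b : ℕ → ℂ) (j : ℕ) : dcoef μ (co b) (2 * j) = 0 := by
  match j with
  | 0 => norm_num [dcoef, D1, sh, co]
  | 1 => norm_num [dcoef, D1, sh, co]
  | (m + 2) =>
    rw [show 2 * (m + 2) = (2 * m + 1) + 3 by ring, dcoef_eval,
      show 2 * m + 1 + 5 = 2 * (m + 3) by ring, show 2 * m + 1 + 3 = 2 * (m + 2) by ring,
      show 2 * m + 1 + 1 = 2 * (m + 1) by ring, co_even, co_even, co_even]
    ring

lemma even_iff (μ : ℂ) (a : ℕ → ℂ) : (∀ k, dcoef μ (ce a) k = 0) ↔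
    (2 * μ * a 1 + (μ ^ 2 - μ - 2) * a 0 = 0 ∧
      ∀ n : ℕ, 1 ≤ n →
        2 * μ * (2 * (n : ℂ) ^ 2 + 3 * n + 1) * a (n + 1)
          - (4 * (n : ℂ) ^ 2 + (4 * μ - 6) * n - μ ^ 2 + μ + 2) * a n
          + (4 * (n : ℂ) - 5 - μ) * a (n - 1) = 0) := by
  constructor
  · intro h
    refine ⟨by rw [← dcoef_ce_zero μ a]; exact h 0, fun n hn => ?_⟩
    obtain ⟨m, rfl⟩ : ∃ m, n = m + 1 := ⟨n - 1, by omega⟩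
    have hd := h (2 * m + 2)
    rw [dcoef_ce_even] at hd
    simp only [Nat.add_sub_cancel]
    push_cast
    linear_combination hd
  · rintro ⟨h0, hrec⟩ k
    rcases Nat.even_or_odd k with ⟨j, hj⟩ | ⟨j, hj⟩
    · rw [hj, show j + j = 2 * j by ring]
      cases j with
      | zero => rw [Nat.mul_zero, dcoef_ce_zero]; exact h0
      | succ m =>
        rw [show 2 * (m + 1) = 2 * m + 2 by ring, dcoef_ce_even]
        have hd := hrec (m + 1) (by omega)
        simp only [Nat.add_sub_cancel] at hd
        push_cast at hd
        linear_combination hd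
    · rw [hj, dcoef_ce_odd]

lemma odd_iff (μ : ℂ) (b : ℕ → ℂ) : (∀ k, dcoef μ (co b) k = 0) ↔
    (6 * μ * b 1 + (μ ^ 2 - 3 * μ) * b 0 = 0 ∧
      ∀ n : ℕ, 1 ≤ n →
        2 * μ * (2 * (n : ℂ) ^ 2 + 5 * n + 3) * b (n + 1)
          - (4 * (n : ℂ) ^ 2 + (4 * μ - 2) * n - μ ^ 2 + 3 * μ) * b n
          + (4 * (n : ℂ) - 3 - μ) * b (n - 1) = 0) := by
  constructor
  · intro h
    refine ⟨by rw [← dcoef_co_one μ b]; exact h 1, fun n hn => ?_⟩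
    obtain ⟨m, rfl⟩ : ∃ m, n = m + 1 := ⟨n - 1, by omega⟩
    have hd := h (2 * m + 3)
    rw [dcoef_co_rec] at hd
    simp only [Nat.add_sub_cancel]
    push_cast
    linear_combination hd
  · rintro ⟨h0, hrec⟩ k
    rcases Nat.even_or_odd k with ⟨j, hj⟩ | ⟨j, hj⟩
    · rw [hj, show j + j = 2 * j by ring, dcoef_co_even]
    · rw [hj]
      cases j with
      | zero => rw [show 2 * 0 + 1 = 1 by rfl, dcoef_co_one]; exact h0
      | succ m =>
        rw [show 2 * (m + 1) + 1 = 2 * m + 3 by ring, dcoef_co_rec]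
        have hd := hrec (m + 1) (by omega)
        simp only [Nat.add_sub_cancel] at hd
        push_cast at hd
        linear_combination hd

lemma tsum_ce (a : ℕ → ℂ) (w : ℂ) :
    ∑' n : ℕ, a n * w ^ (2 * n) = ∑' k : ℕ, ce a k * w ^ k := by
  have hinj : Function.Injective (fun n : ℕ => 2 * n) := fun x y hxy => by
    have : 2 * x = 2 * y := hxy
    omega
  have hsupp : Function.support (fun k => ce a k * w ^ k) ⊆ Set.range (fun n : ℕ => 2 * n) := by
    intro k hk
    have : ce a k ≠ 0 := fun hc => hk (by simp [hc])
    have hm : k % 2 = 0 := by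
      by_contra hm
      exact this (by simp [ce, hm])
    exact ⟨k / 2, show 2 * (k / 2) = k by omega⟩
  calc ∑' n : ℕ, a n * w ^ (2 * n) = ∑' n : ℕ, ce a (2 * n) * w ^ (2 * n) :=
        tsum_congr fun n => by rw [ce_even]
    _ = ∑' k : ℕ, ce a k * w ^ k := hinj.tsum_eq hsupp

lemma summable_ce (a : ℕ → ℂ) (w : ℂ) (h : Summable fun n : ℕ => a n * w ^ (2 * n)) :
    Summable fun k : ℕ => ce a k * w ^ k := by
  have hinj : Function.Injective (fun n : ℕ => 2 * n) := fun x y hxy => by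
    have : 2 * x = 2 * y := hxy
    omega
  have hsupp : ∀ k ∉ Set.range (fun n : ℕ => 2 * n), ce a k * w ^ k = 0 := by
    intro k hk
    have hm : k % 2 ≠ 0 := fun hm => hk ⟨k / 2, show 2 * (k / 2) = k by omega⟩
    simp [ce, hm]
  refine (hinj.summable_iff hsupp).1 ?_
  have : ((fun k => ce a k * w ^ k) ∘ fun n : ℕ => 2 * n) = fun n : ℕ => a n * w ^ (2 * n) := by
    funext n
    simp [Function.comp, ce_even]
  rwa [this]

lemma tsum_co (b : ℕ → ℂ) (w : ℂ) :
    ∑' n : ℕ, b n * w ^ (2 * n + 1) = ∑' k : ℕ, co b k * w ^ k := by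
  have hinj : Function.Injective (fun n : ℕ => 2 * n + 1) := fun x y hxy => by
    have : 2 * x + 1 = 2 * y + 1 := hxy
    omega
  have hsupp : Function.support (fun k => co b k * w ^ k) ⊆
      Set.range (fun n : ℕ => 2 * n + 1) := by
    intro k hk
    have : co b k ≠ 0 := fun hc => hk (by simp [hc])
    have hm : k % 2 = 1 := by
      by_contra hm
      exact this (by simp [co, hm])
    exact ⟨k / 2, show 2 * (k / 2) + 1 = k by omega⟩
  calc ∑' n : ℕ, b n * w ^ (2 * n + 1) = ∑' n : ℕ, co b (2 * n + 1) * w ^ (2 * n + 1) :=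
        tsum_congr fun n => by rw [co_odd]
    _ = ∑' k : ℕ, co b k * w ^ k := hinj.tsum_eq hsupp

lemma summable_co (b : ℕ → ℂ) (w : ℂ) (h : Summable fun n : ℕ => b n * w ^ (2 * n + 1)) :
    Summable fun k : ℕ => co b k * w ^ k := by
  have hinj : Function.Injective (fun n : ℕ => 2 * n + 1) := fun x y hxy => by
    have : 2 * x + 1 = 2 * y + 1 := hxy
    omega
  have hsupp : ∀ k ∉ Set.range (fun n : ℕ => 2 * n + 1), co b k * w ^ k = 0 := by
    intro k hk
    have hm : k % 2 ≠ 1 := fun hm => hk ⟨k / 2, show 2 * (k / 2) + 1 = k by omega⟩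
    simp [co, hm]
  refine (hinj.summable_iff hsupp).1 ?_
  have : ((fun k => co b k * w ^ k) ∘ fun n : ℕ => 2 * n + 1)
      = fun n : ℕ => b n * w ^ (2 * n + 1) := by
    funext n
    simp [Function.comp, co_odd]
  rwa [this]

end S6
end



theorem statement6 (μ : ℂ) (r : ℝ) (hr : 0 < r) (a b : ℕ → ℂ)
    (ha : ∀ η : ℂ, ‖η‖ < r → Summable (fun n : ℕ => a n * η ^ (2 * n)))
    (hb : ∀ η : ℂ, ‖η‖ < r → Summable (fun n : ℕ => b n * η ^ (2 * n + 1))) :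
    ((∀ η : ℂ, ‖η‖ < r →
        (μ - η ^ 2) * deriv (deriv (fun w : ℂ => ∑' n : ℕ, a n * w ^ (2 * n))) η
          - 2 * η * (μ - 1 - η ^ 2) * deriv (fun w : ℂ => ∑' n : ℕ, a n * w ^ (2 * n)) η
          + (μ + 1) * (μ - 2 - η ^ 2) * (∑' n : ℕ, a n * η ^ (2 * n)) = 0) ↔
      (2 * μ * a 1 + (μ ^ 2 - μ - 2) * a 0 = 0 ∧
        ∀ n : ℕ, 1 ≤ n →
          2 * μ * (2 * (n : ℂ) ^ 2 + 3 * n + 1) * a (n + 1)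
            - (4 * (n : ℂ) ^ 2 + (4 * μ - 6) * n - μ ^ 2 + μ + 2) * a n
            + (4 * (n : ℂ) - 5 - μ) * a (n - 1) = 0)) ∧
    ((∀ η : ℂ, ‖η‖ < r →
        (μ - η ^ 2) * deriv (deriv (fun w : ℂ => ∑' n : ℕ, b n * w ^ (2 * n + 1))) η
          - 2 * η * (μ - 1 - η ^ 2) * deriv (fun w : ℂ => ∑' n : ℕ, b n * w ^ (2 * n + 1)) η
          + (μ + 1) * (μ - 2 - η ^ 2) * (∑' n : ℕ, b n * η ^ (2 * n + 1)) = 0) ↔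
      (6 * μ * b 1 + (μ ^ 2 - 3 * μ) * b 0 = 0 ∧
        ∀ n : ℕ, 1 ≤ n →
          2 * μ * (2 * (n : ℂ) ^ 2 + 5 * n + 3) * b (n + 1)
            - (4 * (n : ℂ) ^ 2 + (4 * μ - 2) * n - μ ^ 2 + 3 * μ) * b n
            + (4 * (n : ℂ) - 3 - μ) * b (n - 1) = 0)) := by
  constructor
  · have hsum : ∀ η : ℂ, ‖η‖ < r → Summable fun k : ℕ => S6.ce a k * η ^ k :=
      fun η hη => S6.summable_ce a η (ha η hη)
    have hco := S6.main_core hr μ (S6.ce a) hsum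
    simp only [S6.tsum_ce a]
    exact hco.trans (S6.even_iff μ a)
  · have hsum : ∀ η : ℂ, ‖η‖ < r → Summable fun k : ℕ => S6.co b k * η ^ k :=
      fun η hη => S6.summable_co b η (hb η hη)
    have hco := S6.main_core hr μ (S6.co b) hsum
    simp only [S6.tsum_co b]
    exact hco.trans (S6.odd_iff μ b)
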